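/- Let C be an [n,k] linear code with generator columns g_i, and let S_i, S_j be two (r,δ)-repair sets with |S_i ∩ S_j| ≥ |S_i| - δ + 1. Then rank(S_i) = rank(S_i ∩ S_j), and consequently span(S_i) ⊆ span(S_j). -/

import Mathlib

/-- The dimension of the span of the generator-matrix columns indexed by N. -/
noncomputable def colRank (F : Type*) [Field F] {n k : ℕ} (g : Fin n → (Fin k → F))
    (N : Finset (Fin n)) : ℕ :=
  Module.finrank F (Submodule.span F (g '' ↑N))

/-- If S_i, S_j are (r,δ)-repair sets with |S_i ∩ S_j| ≥ |S_i| - δ + 1, then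
    rank(S_i) = rank(S_i ∩ S_j) and span(S_i) ⊆ span(S_j). -/
theorem stmt_14 {F : Type*} [Field F] (n k r δ : ℕ) (hδ : 2 ≤ δ) (hr : 1 ≤ r)
    (g : Fin n → (Fin k → F))
    (Si Sj : Finset (Fin n))
    (hsizei : Si.card ≤ r + δ - 1) (hsizej : Sj.card ≤ r + δ - 1)
    (hrepi : ∀ L ⊆ Si, L.card = Si.card - (δ - 1) →
      colRank F g L = colRank F g Si)
    (hrepj : ∀ L ⊆ Sj, L.card = Sj.card - (δ - 1) →
      colRank F g L = colRank F g Sj)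
    (hint : ((Si.card : ℤ) - δ + 1) ≤ ((Si ∩ Sj).card : ℤ)) :
    colRank F g Si = colRank F g (Si ∩ Sj) ∧
    Submodule.span F (g '' ↑Si) ≤ Submodule.span F (g '' ↑Sj) := by
  have hcard : Si.card - (δ - 1) ≤ (Si ∩ Sj).card := by omega
  obtain ⟨L, hLsub, hLcard⟩ := Finset.exists_subset_card_eq hcard
  have hLi : L ⊆ Si := hLsub.trans (Finset.inter_subset_left)
  have h1 : colRank F g L = colRank F g Si := hrepi L hLi hLcard
  have hfin : FiniteDimensional F (Submodule.span F (g '' ↑Si)) :=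
    FiniteDimensional.span_of_finite F (((Si : Set (Fin n)).toFinite).image g)
  have hleL : Submodule.span F (g '' ↑L) ≤ Submodule.span F (g '' ↑Si) :=
    Submodule.span_mono (Set.image_mono (by exact_mod_cast hLi))
  have hleLint : Submodule.span F (g '' ↑L) ≤ Submodule.span F (g '' ↑(Si ∩ Sj)) :=
    Submodule.span_mono (Set.image_mono (by exact_mod_cast hLsub))
  have hleInt : Submodule.span F (g '' ↑(Si ∩ Sj)) ≤ Submodule.span F (g '' ↑Si) :=
    Submodule.span_mono (Set.image_mono (by exact_mod_cast Finset.inter_subset_left))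
  have heq : Submodule.span F (g '' ↑L) = Submodule.span F (g '' ↑Si) :=
    Submodule.eq_of_le_of_finrank_le hleL (le_of_eq h1.symm)
  have heq2 : Submodule.span F (g '' ↑(Si ∩ Sj)) = Submodule.span F (g '' ↑Si) :=
    le_antisymm hleInt (heq ▸ hleLint)
  refine ⟨by unfold colRank; rw [heq2], ?_⟩
  rw [← heq2]
  exact Submodule.span_mono (Set.image_mono (by exact_mod_cast Finset.inter_subset_right))
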